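/- Let π and π̄ be elements of a commutative ring with π + π̄ = a and π·π̄ = c. For k ≥ 0, let h_k(π, π̄) = Σ_{i=0}^{k} π^i π̄^{k-i} denote the complete homogeneous symmetric polynomial of degree k in two variables evaluated at (π, π̄). Define ε_k = 0 if k is odd and ε_k = (-c)^{k/2} if k is even. Then h_k(π, π̄) = ε_k + Σ_{j=0}^{⌈k/2⌉-1} (-1)^j * C(k - j, j) * a^{k-2j} * c^j. -/

import Mathlib

open Finset

private def gg {R : Type*} [CommRing R] (a c : R) (k j : ℕ) : R :=
  (-1) ^ j * (Nat.choose (k - j) j : R) * a ^ (k - 2 * j) * c ^ j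

private def UU {R : Type*} [CommRing R] (a c : R) (k : ℕ) : R :=
  ∑ j ∈ Finset.range (k / 2 + 1), gg a c k j

private lemma gg_zero {R : Type*} [CommRing R] (a c : R) (k j : ℕ) (h : k / 2 + 1 ≤ j) :
    gg a c k j = 0 := by
  have : k - j < j := by omega
  simp [gg, Nat.choose_eq_zero_of_lt this]

private lemma UU_eq {R : Type*} [CommRing R] (a c : R) (k n : ℕ) (h : k / 2 + 1 ≤ n) :
    UU a c k = ∑ j ∈ Finset.range n, gg a c k j := by
  rw [UU]
  exact Finset.sum_subset (Finset.range_subset_range.2 h)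
    (fun j _ hj => gg_zero a c k j (by simpa using hj))

private lemma gg_rec {R : Type*} [CommRing R] (a c : R) (k j : ℕ) (hj : j ≤ k) :
    gg a c (k+2) (j+1) = a * gg a c (k+1) (j+1) - c * gg a c k j := by
  have h1 : k + 2 - (j + 1) = (k - j) + 1 := by omega
  have h2 : k + 1 - (j + 1) = k - j := by omega
  have h3 : k + 2 - 2 * (j + 1) = k - 2 * j := by omega
  rw [gg, gg, gg, h1, h2, h3, Nat.choose_succ_succ]
  by_cases h : 2 * j + 1 ≤ k
  · have h4 : k + 1 - 2 * (j + 1) + 1 = k - 2 * j := by omega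
    have : a ^ (k + 1 - 2 * (j + 1)) * a = a ^ (k - 2 * j) := by
      rw [← pow_succ, h4]
    push_cast
    rw [← this]
    ring
  · have hz : Nat.choose (k - j) (j + 1) = 0 := Nat.choose_eq_zero_of_lt (by omega)
    rw [hz]
    push_cast
    ring

private lemma UU_rec {R : Type*} [CommRing R] (a c : R) (k : ℕ) :
    UU a c (k+2) = a * UU a c (k+1) - c * UU a c k := by
  rw [UU_eq a c (k+2) (k+2) (by omega), UU_eq a c (k+1) (k+2) (by omega),
    UU_eq a c k (k+1) (by omega), Finset.sum_range_succ' _ (k+1),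
    Finset.sum_range_succ' (gg a c (k+1)) (k+1), Finset.mul_sum, mul_add, Finset.mul_sum]
  have h0 : a * gg a c (k+1) 0 = gg a c (k+2) 0 := by
    simp only [gg, Nat.sub_zero, mul_zero, pow_zero, mul_one, pow_zero, one_mul]
    simp [pow_succ]
    ring
  have hterm : ∑ j ∈ Finset.range (k+1), gg a c (k+2) (j+1)
      = ∑ j ∈ Finset.range (k+1), (a * gg a c (k+1) (j+1) - c * gg a c k j) :=
    Finset.sum_congr rfl fun j hj => gg_rec a c k j (by simpa using Nat.lt_succ_iff.mp (Finset.mem_range.mp hj))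
  rw [hterm, Finset.sum_sub_distrib, h0]
  ring

private lemma H_succ_pi {R : Type*} [CommRing R] (π πb : R) (k : ℕ) :
    ∑ i ∈ Finset.range (k+2), π^i * πb^(k+1-i)
      = π * ∑ i ∈ Finset.range (k+1), π^i * πb^(k-i) + πb^(k+1) := by
  rw [Finset.sum_range_succ', Finset.mul_sum]
  simp only [Nat.succ_sub_succ, pow_zero, one_mul, Nat.sub_zero]
  congr 1
  exact Finset.sum_congr rfl fun i _ => by rw [pow_succ']; ring

theorem stmt3 (R : Type*) [CommRing R] (π πb a c : R)
    (ha : π + πb = a) (hc : π * πb = c) (k : ℕ) :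
    ∑ i ∈ Finset.range (k + 1), π ^ i * πb ^ (k - i) =
      (if Even k then (-c) ^ (k / 2) else 0) +
        ∑ j ∈ Finset.range ((k + 1) / 2),
          (-1 : R) ^ j * (Nat.choose (k - j) j : R) * a ^ (k - 2 * j) * c ^ j := by
  subst ha hc
  have key : ∀ m : ℕ, ∑ i ∈ Finset.range (m+1), π^i * πb^(m-i) = UU (π+πb) (π*πb) m := by
    have main : ∀ m : ℕ,
        (∑ i ∈ Finset.range (m+1), π^i * πb^(m-i) = UU (π+πb) (π*πb) m) ∧
        (∑ i ∈ Finset.range (m+2), π^i * πb^(m+1-i) = UU (π+πb) (π*πb) (m+1)) := by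
      intro m
      induction m with
      | zero =>
        constructor
        · simp [UU, gg]
        · simp [UU, gg, Finset.sum_range_succ]
          ring
      | succ n ih =>
        refine ⟨ih.2, ?_⟩
        rw [UU_rec (π+πb) (π*πb) n, ← ih.1, ← ih.2]
        have e1 := H_succ_pi π πb (n+1)
        have e2 := H_succ_pi π πb n
        rw [show n+1+2 = n+3 from rfl, show n+1+1 = n+2 from rfl] at e1
        rw [show n+1+1 = n+2 from rfl, show n+1+2 = n+3 from rfl]
        rw [e1, e2]
        ring
    exact fun m => (main m).1
  rw [key k]
  by_cases hk : Even k
  · obtain ⟨t, ht⟩ := hk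
    have h1 : k / 2 = t := by omega
    have h2 : (k+1) / 2 = t := by omega
    have h3 : k - t = t := by omega
    have h4 : k - 2 * t = 0 := by omega
    rw [if_pos ⟨t, ht⟩, UU, h1, h2, Finset.sum_range_succ, gg, h3, h4,
      Nat.choose_self, neg_pow]
    push_cast
    simp only [gg]
    ring
  · have hk' : k % 2 = 1 := Nat.odd_iff.mp (Nat.not_even_iff_odd.mp hk)
    have h2 : (k+1) / 2 = k / 2 + 1 := by omega
    rw [if_neg hk, zero_add, UU, h2]
    simp only [gg]
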